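/- Let X₁, X₂, … be i.i.d. χ²₁ random variables, let X_{(1)}(n) = max_{1 ≤ i ≤ n} X_i, and let t_n = 2 log n − log log n − log π. Then for each fixed positive integer k, lim_{n→∞} E[ X_{(1)}(n)^k ] / t_n^k = 1. -/

import Mathlib

set_option autoImplicit false

open MeasureTheory ProbabilityTheory Filter Real

/-- The chi-squared distribution with one degree of freedom: the law of `Z^2`
for `Z` a standard normal random variable. -/
noncomputable def chiSq1 : Measure ℝ :=
  Measure.map (fun z : ℝ => z ^ 2) (gaussianReal 0 1)

open scoped ENNReal NNReal Topology

set_option maxHeartbeats 1000000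

lemma hasDeriv_aux (k : ℕ) (x : ℝ) :
    HasDerivAt (fun x : ℝ => x^(2*k) * Real.exp (-x^2/2 + x))
      ((2*k : ℕ) * x^(2*k-1) * Real.exp (-x^2/2 + x)
        + x^(2*k) * (Real.exp (-x^2/2 + x) * (-x+1))) x := by
  have h1 : HasDerivAt (fun x : ℝ => x^(2*k)) ((2*k : ℕ) * x^(2*k-1)) x := hasDerivAt_pow _ x
  have h2 : HasDerivAt (fun x : ℝ => -x^2/2 + x) (-x + 1) x := by
    have := (((hasDerivAt_pow 2 x).neg.div_const 2).add (hasDerivAt_id x))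
    refine this.congr_deriv ?_
    push_cast
    ring
  exact h1.mul h2.exp

lemma key_mono (k : ℕ) (hk : 1 ≤ k) {s w : ℝ} (hs : 2*(k:ℝ)+2 ≤ s) (hw : s ≤ w) :
    w^(2*k) * Real.exp (-w^2/2 + w) ≤ s^(2*k) * Real.exp (-s^2/2 + s) := by
  have h : AntitoneOn (fun x : ℝ => x^(2*k) * Real.exp (-x^2/2 + x)) (Set.Ici s) := by
    apply antitoneOn_of_deriv_nonpos (convex_Ici s)
    · fun_prop
    · intro x hx
      exact (hasDeriv_aux k x).differentiableAt.differentiableWithinAt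
    · intro x hx
      rw [interior_Ici] at hx
      rw [(hasDeriv_aux k x).deriv]
      have hx2 : 2*(k:ℝ)+2 ≤ x := le_trans hs hx.le
      have hk0 : (0:ℝ) ≤ k := Nat.cast_nonneg k
      have hx0 : (0:ℝ) < x := by linarith
      have hE : 0 < Real.exp (-x^2/2 + x) := Real.exp_pos _
      have hy : 0 ≤ x^(2*k-1) := by positivity
      have hrw : x^(2*k) = x^(2*k-1)*x := by
        rw [← pow_succ]; congr 1; omega
      have key : 2*(k:ℝ) + x*(-x+1) ≤ 0 := by nlinarith
      calc (2*k : ℕ) * x^(2*k-1) * Real.exp (-x^2/2 + x)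
            + x^(2*k) * (Real.exp (-x^2/2 + x) * (-x+1))
          = (x^(2*k-1) * Real.exp (-x^2/2 + x)) * (2*(k:ℝ) + x*(-x+1)) := by
            rw [hrw]; push_cast; ring
        _ ≤ 0 := mul_nonpos_of_nonneg_of_nonpos (mul_nonneg hy hE.le) key
  exact h Set.self_mem_Ici hw hw


lemma sq_meas : Measurable (fun z : ℝ => z ^ 2) := by measurability

instance chiSq1_prob : IsProbabilityMeasure chiSq1 :=
  Measure.isProbabilityMeasure_map sq_meas.aemeasurable

lemma gPDF (z : ℝ) : gaussianPDFReal 0 1 z = (Real.sqrt (2*π))⁻¹ * Real.exp (-z^2/2) := by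
  simp [gaussianPDFReal]

lemma chiSq1_apply {s : Set ℝ} (hs : MeasurableSet s) :
    chiSq1 s = gaussianReal 0 1 ((fun z : ℝ => z ^ 2) ⁻¹' s) :=
  Measure.map_apply sq_meas hs

lemma chiSq1_neg : chiSq1 (Set.Iio 0) = 0 := by
  rw [chiSq1_apply measurableSet_Iio]
  convert measure_empty
  · ext z
    simp only [Set.mem_preimage, Set.mem_Iio, Set.mem_empty_iff_false, iff_false, not_lt]
    positivity
  · infer_instance

lemma chiSq1_integral (f : ℝ → ℝ) (hf : Measurable f) :
    ∫ x, f x ∂chiSq1 = ∫ z, f (z^2) * gaussianPDFReal 0 1 z := by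
  rw [chiSq1, integral_map sq_meas.aemeasurable hf.aestronglyMeasurable]
  rw [gaussianReal_of_var_ne_zero 0 one_ne_zero]
  have : volume.withDensity (gaussianPDF 0 1)
      = volume.withDensity (fun x => ((Real.toNNReal (gaussianPDFReal 0 1 x)) : ℝ≥0∞)) := rfl
  rw [this, integral_withDensity_eq_integral_smul
    ((measurable_gaussianPDFReal 0 1).real_toNNReal) (fun z => f (z^2))]
  congr 1
  ext z
  simp [NNReal.smul_def, Real.coe_toNNReal _ (gaussianPDFReal_nonneg 0 1 z), mul_comm]

lemma chiSq1_integrable_iff (f : ℝ → ℝ) (hf : Measurable f) :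
    Integrable f chiSq1 ↔ Integrable (fun z => f (z^2) * gaussianPDFReal 0 1 z) := by
  rw [chiSq1, integrable_map_measure hf.aestronglyMeasurable sq_meas.aemeasurable]
  rw [gaussianReal_of_var_ne_zero 0 one_ne_zero]
  rw [integrable_withDensity_iff (measurable_gaussianPDF 0 1)]
  · constructor <;> intro h <;> refine h.congr (ae_of_all _ fun z => ?_) <;>
      simp [gaussianPDF, ENNReal.toReal_ofReal (gaussianPDFReal_nonneg 0 1 z)]
  · exact ae_of_all _ fun z => ENNReal.ofReal_lt_top

lemma chiSq1_integrable_pow (m : ℕ) : Integrable (fun x : ℝ => x ^ m) chiSq1 := by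
  rw [chiSq1_integrable_iff (fun x => x ^ m) (by fun_prop)]
  have hbound : ∀ z : ℝ, |(z^2)^m * gaussianPDFReal 0 1 z|
      ≤ (√(2*π))⁻¹ * (4^m * (m.factorial : ℝ)) * Real.exp (-(1/4) * z^2) := by
    intro z
    have h0 : 0 ≤ (z^2)^m * gaussianPDFReal 0 1 z :=
      mul_nonneg (by positivity) (gaussianPDFReal_nonneg 0 1 z)
    rw [abs_of_nonneg h0, gPDF]
    have h1 : (z^2/4)^m / (m.factorial : ℝ) ≤ Real.exp (z^2/4) :=
      Real.pow_div_factorial_le_exp (x := z^2/4) (by positivity) m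
    have h2 : (z^2)^m ≤ 4^m * (m.factorial : ℝ) * Real.exp (z^2/4) := by
      rw [div_pow] at h1
      have hf : (0:ℝ) < (m.factorial : ℝ) := by positivity
      rw [div_div, div_le_iff₀ (by positivity)] at h1
      calc (z^2)^m ≤ Real.exp (z^2/4) * (4^m * (m.factorial:ℝ)) := h1
        _ = 4^m * (m.factorial : ℝ) * Real.exp (z^2/4) := by ring
    have h3 : Real.exp (z^2/4) * Real.exp (-z^2/2) = Real.exp (-(1/4) * z^2) := by
      rw [← Real.exp_add]; ring_nf
    calc (z^2)^m * ((√(2*π))⁻¹ * Real.exp (-z^2/2))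
        ≤ (4^m * (m.factorial : ℝ) * Real.exp (z^2/4)) * ((√(2*π))⁻¹ * Real.exp (-z^2/2)) := by
          apply mul_le_mul_of_nonneg_right h2
          positivity
      _ = (√(2*π))⁻¹ * (4^m * (m.factorial : ℝ)) * (Real.exp (z^2/4) * Real.exp (-z^2/2)) := by
          ring
      _ = (√(2*π))⁻¹ * (4^m * (m.factorial : ℝ)) * Real.exp (-(1/4) * z^2) := by rw [h3]
  apply Integrable.mono' (((integrable_exp_neg_mul_sq (by norm_num : (0:ℝ) < 1/4)).const_mul
    ((√(2*π))⁻¹ * (4^m * (m.factorial : ℝ)))))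
  · exact ((measurable_id.pow_const m).comp sq_meas).mul
      (measurable_gaussianPDFReal 0 1) |>.aestronglyMeasurable
  · exact ae_of_all _ hbound

lemma chiSq1_integrable_indicator (m : ℕ) (a : ℝ) :
    Integrable (Set.indicator (Set.Ioi a) (fun x : ℝ => x ^ m)) chiSq1 :=
  (chiSq1_integrable_pow m).indicator measurableSet_Ioi

lemma chiSq1_tail (k : ℕ) (hk : 1 ≤ k) {a : ℝ} (ha : (2*(k:ℝ)+2)^2 ≤ a) :
    ∫ x in Set.Ioi a, x ^ k ∂chiSq1 ≤ 2 * (√(2*π))⁻¹ * a ^ k * Real.exp (-a/2) := by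
  have hk0 : (0:ℝ) ≤ k := Nat.cast_nonneg k
  have ha0 : (0:ℝ) ≤ a := le_trans (by positivity) ha
  set s : ℝ := √a with hs_def
  have hs2 : s^2 = a := Real.sq_sqrt ha0
  have hs_lb : 2*(k:ℝ)+2 ≤ s := by
    have := Real.sqrt_le_sqrt ha
    rwa [Real.sqrt_sq (by positivity)] at this
  have hs0 : (0:ℝ) < s := by linarith
  set B : Set ℝ := Set.Iic (-s) ∪ Set.Ioi s with hB_def
  have hBmeas : MeasurableSet B := measurableSet_Iic.union measurableSet_Ioi
  set G : ℝ → ℝ := fun z => ((√(2*π))⁻¹ * a ^ k * Real.exp (-a/2)) *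
    Set.indicator B (fun z => Real.exp (s - |z|)) z with hG_def
  have hFmeas : Measurable (Set.indicator (Set.Ioi a) (fun x : ℝ => x ^ k)) :=
    (measurable_id.pow_const k).indicator measurableSet_Ioi
  rw [← integral_indicator measurableSet_Ioi, chiSq1_integral _ hFmeas]
  have hIntB1 : IntegrableOn (fun z : ℝ => Real.exp (s - |z|)) (Set.Iic (-s)) := by
    apply IntegrableOn.congr_fun (f := fun z : ℝ => Real.exp s * Real.exp z)
    · exact (integrableOn_exp_Iic (-s)).const_mul _
    · intro z hz
      simp only [Set.mem_Iic] at hz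
      have h1 : |z| = -z := abs_of_nonpos (by linarith)
      simp only [h1, ← Real.exp_add]
      ring_nf
    · exact measurableSet_Iic
  have hIntB2 : IntegrableOn (fun z : ℝ => Real.exp (s - |z|)) (Set.Ioi s) := by
    apply IntegrableOn.congr_fun (f := fun z : ℝ => Real.exp s * Real.exp (-1 * z))
    · exact (exp_neg_integrableOn_Ioi s one_pos).const_mul _
    · intro z hz
      simp only [Set.mem_Ioi] at hz
      have h1 : |z| = z := abs_of_pos (lt_trans hs0 hz)
      simp only [h1, ← Real.exp_add]
      ring_nf
    · exact measurableSet_Ioi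
  have hdisj : Disjoint (Set.Iic (-s)) (Set.Ioi s) :=
    Set.Iic_disjoint_Ioi (by linarith)
  have hIntInd : Integrable (Set.indicator B (fun z : ℝ => Real.exp (s - |z|))) := by
    rw [integrable_indicator_iff hBmeas]
    exact hIntB1.union hIntB2
  have hGint : Integrable G := hIntInd.const_mul _
  have hpt : ∀ z : ℝ, Set.indicator (Set.Ioi a) (fun x : ℝ => x ^ k) (z^2)
      * gaussianPDFReal 0 1 z ≤ G z := by
    intro z
    by_cases hz : z^2 ∈ Set.Ioi a
    · have hza : a < z^2 := hz
      have habs : s < |z| := by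
        by_contra h
        push_neg at h
        have h2 : z^2 ≤ s^2 := by nlinarith [abs_nonneg z, sq_abs z]
        rw [hs2] at h2
        linarith
      have hzB : z ∈ B := by
        rcases le_or_gt 0 z with h0 | h0
        · right
          rw [abs_of_nonneg h0] at habs
          exact habs
        · left
          rw [abs_of_neg h0] at habs
          simp only [Set.mem_Iic]
          linarith
      rw [hG_def]
      simp only
      rw [Set.indicator_of_mem hz, Set.indicator_of_mem hzB, gPDF]
      have hkey : |z|^(2*k) * Real.exp (-|z|^2/2 + |z|) ≤ s^(2*k) * Real.exp (-s^2/2 + s) :=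
        key_mono k hk hs_lb habs.le
      have h1 : (z^2)^k = |z|^(2*k) := by
        rw [← sq_abs z]
        exact (pow_mul |z| 2 k).symm
      have hstep : (z^2)^k * Real.exp (-z^2/2) ≤ a^k * Real.exp (-a/2) * Real.exp (s - |z|) := by
        rw [h1, show Real.exp (-z^2/2) = Real.exp (-|z|^2/2) by rw [sq_abs]]
        have e1 : Real.exp (-|z|^2/2) = Real.exp (-|z|^2/2 + |z|) * Real.exp (-|z|) := by
          rw [← Real.exp_add]; ring_nf
        have e2 : s^(2*k) * Real.exp (-s^2/2 + s) * Real.exp (-|z|)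
            = a^k * Real.exp (-a/2) * Real.exp (s - |z|) := by
          have h3 : Real.exp (s - |z|) = Real.exp s * Real.exp (-|z|) := by
            rw [← Real.exp_add]; ring_nf
          have h4 : Real.exp (-s^2/2 + s) = Real.exp (-s^2/2) * Real.exp s := by
            rw [← Real.exp_add]
          rw [h3, ← hs2, ← pow_mul, h4]
          ring
        calc |z|^(2*k) * Real.exp (-|z|^2/2)
            = |z|^(2*k) * Real.exp (-|z|^2/2 + |z|) * Real.exp (-|z|) := by rw [e1]; ring
          _ ≤ s^(2*k) * Real.exp (-s^2/2 + s) * Real.exp (-|z|) :=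
              mul_le_mul_of_nonneg_right hkey (Real.exp_pos _).le
          _ = a^k * Real.exp (-a/2) * Real.exp (s - |z|) := e2
      calc (z^2)^k * ((√(2*π))⁻¹ * Real.exp (-z^2/2))
          = (√(2*π))⁻¹ * ((z^2)^k * Real.exp (-z^2/2)) := by ring
        _ ≤ (√(2*π))⁻¹ * (a^k * Real.exp (-a/2) * Real.exp (s - |z|)) :=
            mul_le_mul_of_nonneg_left hstep (by positivity)
        _ = (√(2*π))⁻¹ * a^k * Real.exp (-a/2) * Real.exp (s - |z|) := by ring
    · rw [Set.indicator_of_notMem hz, zero_mul]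
      apply mul_nonneg (by positivity)
      apply Set.indicator_nonneg
      intro x _
      positivity
  have hFint : Integrable (fun z => Set.indicator (Set.Ioi a) (fun x : ℝ => x ^ k) (z^2)
      * gaussianPDFReal 0 1 z) := by
    rw [← chiSq1_integrable_iff _ hFmeas]
    exact chiSq1_integrable_indicator k a
  refine le_trans (integral_mono hFint hGint hpt) ?_
  rw [hG_def, integral_const_mul ((√(2*π))⁻¹ * a ^ k * Real.exp (-a/2)) (Set.indicator B (fun z => Real.exp (s - |z|)))]
  have hGval : ∫ z, Set.indicator B (fun z : ℝ => Real.exp (s - |z|)) z = 2 := by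
    rw [integral_indicator hBmeas, hB_def,
      setIntegral_union hdisj measurableSet_Ioi hIntB1 hIntB2]
    have e1 : ∫ z in Set.Iic (-s), Real.exp (s - |z|) = 1 := by
      rw [setIntegral_congr_fun measurableSet_Iic
        (g := fun z : ℝ => Real.exp s * Real.exp z) (fun z hz => by
          simp only [Set.mem_Iic] at hz
          have h1 : |z| = -z := abs_of_nonpos (by linarith)
          simp only [h1, ← Real.exp_add]
          ring_nf)]
      rw [integral_const_mul, integral_exp_Iic, ← Real.exp_add]
      simp
    have e2 : ∫ z in Set.Ioi s, Real.exp (s - |z|) = 1 := by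
      rw [setIntegral_congr_fun measurableSet_Ioi
        (g := fun z : ℝ => Real.exp s * Real.exp (-z)) (fun z hz => by
          simp only [Set.mem_Ioi] at hz
          have h1 : |z| = z := abs_of_pos (lt_trans hs0 hz)
          simp only [h1, ← Real.exp_add]
          ring_nf)]
      rw [integral_const_mul, integral_exp_neg_Ioi, ← Real.exp_add]
      simp
    rw [e1, e2]
    norm_num
  rw [hGval]
  exact le_of_eq (by ring)

lemma chiSq1_head {b : ℝ} (hb : 0 ≤ b) :
    (√(2*π))⁻¹ * Real.exp (-(√b+1)^2/2) ≤ (chiSq1 (Set.Ioi b)).toReal := by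
  set s : ℝ := √b with hs_def
  have hs0 : 0 ≤ s := Real.sqrt_nonneg b
  have hs2 : s^2 = b := Real.sq_sqrt hb
  have hsub : Set.Ioc s (s+1) ⊆ (fun z : ℝ => z^2) ⁻¹' (Set.Ioi b) := by
    intro z hz
    rcases hz with ⟨hz1, hz2⟩
    simp only [Set.mem_preimage, Set.mem_Ioi]
    nlinarith
  have hmono : chiSq1 (Set.Ioi b) ≥ gaussianReal 0 1 (Set.Ioc s (s+1)) := by
    rw [chiSq1_apply measurableSet_Ioi]
    exact measure_mono hsub
  have happ : gaussianReal 0 1 (Set.Ioc s (s+1))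
      = ENNReal.ofReal (∫ z in Set.Ioc s (s+1), gaussianPDFReal 0 1 z) :=
    gaussianReal_apply_eq_integral 0 one_ne_zero _
  have hIle : (√(2*π))⁻¹ * Real.exp (-(s+1)^2/2)
      ≤ ∫ z in Set.Ioc s (s+1), gaussianPDFReal 0 1 z := by
    have hconst : ∫ (_ : ℝ) in Set.Ioc s (s+1), ((√(2*π))⁻¹ * Real.exp (-(s+1)^2/2))
        = (√(2*π))⁻¹ * Real.exp (-(s+1)^2/2) := by
      rw [setIntegral_const]
      rw [Real.volume_real_Ioc]
      norm_num
    rw [← hconst]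
    apply setIntegral_mono_on
    · exact integrableOn_const (by rw [Real.volume_Ioc]; exact ENNReal.ofReal_lt_top.ne)
    · exact (integrable_gaussianPDFReal 0 1).integrableOn
    · exact measurableSet_Ioc
    · intro z hz
      rcases hz with ⟨hz1, hz2⟩
      rw [gPDF]
      apply mul_le_mul_of_nonneg_left _ (by positivity)
      apply Real.exp_le_exp.2
      have hz0 : 0 < z := lt_of_le_of_lt hs0 hz1
      nlinarith
  have htop : chiSq1 (Set.Ioi b) ≠ ⊤ := measure_ne_top _ _
  have := ENNReal.toReal_mono htop (happ ▸ hmono)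
  rw [ENNReal.toReal_ofReal (le_trans (by positivity) hIle)] at this
  linarith

lemma log_bound {c : ℝ} (hc : 0 < c) : ∀ᶠ y : ℝ in atTop, |Real.log y| ≤ c * y := by
  have h := Asymptotics.isLittleO_iff.mp Real.isLittleO_log_id_atTop hc
  filter_upwards [h, eventually_ge_atTop (0:ℝ)] with y h1 h2
  simpa [abs_of_nonneg h2] using h1

lemma hlogn : Tendsto (fun n : ℕ => Real.log n) atTop atTop :=
  Real.tendsto_log_atTop.comp tendsto_natCast_atTop_atTop

lemma t_tendsto (t : ℕ → ℝ)
    (ht : ∀ n, t n = 2 * Real.log n - Real.log (Real.log n) - Real.log π) :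
    Tendsto t atTop atTop := by
  have hb : ∀ᶠ n : ℕ in atTop, Real.log n - Real.log π ≤ t n := by
    filter_upwards [hlogn.eventually (log_bound one_pos)] with n hn
    rw [ht n]
    have := abs_le.mp hn
    linarith [this.2]
  apply tendsto_atTop_mono' atTop hb
  exact tendsto_atTop_add_const_right _ _ hlogn

lemma upper_limit (t : ℕ → ℝ)
    (ht : ∀ n, t n = 2 * Real.log n - Real.log (Real.log n) - Real.log π)
    {δ : ℝ} (hδ : 0 < δ) :
    Tendsto (fun n : ℕ => (n:ℝ) * Real.exp (-((1+δ) * t n) / 2)) atTop (𝓝 0) := by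
  have hc : (0:ℝ) < δ / (1+δ) := by positivity
  have key : Tendsto (fun n : ℕ => Real.log n + -((1+δ) * t n) / 2) atTop atBot := by
    have hev : ∀ᶠ n : ℕ in atTop,
        Real.log n + -((1+δ) * t n) / 2 ≤ -(δ/2) * Real.log n + (1+δ)/2 * Real.log π := by
      filter_upwards [hlogn.eventually (log_bound hc)] with n hn
      rw [ht n]
      have h1 := (abs_le.mp hn).2
      have h2 : (1+δ) * (δ/(1+δ) * Real.log n) = δ * Real.log n := by field_simp
      have h3 : (1+δ) * Real.log (Real.log n) ≤ δ * Real.log n := by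
        rw [← h2]
        exact mul_le_mul_of_nonneg_left h1 (by linarith)
      linarith
    apply tendsto_atBot_mono' atTop hev
    apply tendsto_atBot_add_const_right
    exact Tendsto.const_mul_atTop_of_neg (by linarith) hlogn
  have h2 : Tendsto (fun n : ℕ => Real.exp (Real.log n + -((1+δ) * t n) / 2)) atTop (𝓝 0) :=
    Real.tendsto_exp_atBot.comp key
  apply h2.congr'
  filter_upwards [eventually_ge_atTop 1] with n hn
  have hn0 : (0:ℝ) < n := by exact_mod_cast hn
  rw [Real.exp_add, Real.exp_log hn0]

lemma pi_log_nonneg : 0 ≤ Real.log π :=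
  Real.log_nonneg (by linarith [Real.pi_gt_three])

lemma lower_limit (t : ℕ → ℝ)
    (ht : ∀ n, t n = 2 * Real.log n - Real.log (Real.log n) - Real.log π)
    {δ : ℝ} (hδ0 : 0 < δ) (hδ1 : δ < 1) :
    Tendsto (fun n : ℕ => (n:ℝ) * ((√(2*π))⁻¹ * Real.exp (-(√((1-δ)*t n)+1)^2/2)))
      atTop atTop := by
  have key : Tendsto (fun n : ℕ => Real.log n + -(√((1-δ)*t n)+1)^2/2) atTop atTop := by
    have hev : ∀ᶠ n : ℕ in atTop,
        (δ/2) * Real.log n - 1/2 ≤ Real.log n + -(√((1-δ)*t n)+1)^2/2 := by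
      filter_upwards [hlogn.eventually (eventually_ge_atTop (max 1 (8/δ^2))),
        (t_tendsto t ht).eventually (eventually_ge_atTop 0)] with n hL ht0
      have hL1 : (1:ℝ) ≤ Real.log n := le_trans (le_max_left _ _) hL
      have hL8 : 8/δ^2 ≤ Real.log n := le_trans (le_max_right _ _) hL
      have hLL : 0 ≤ Real.log (Real.log n) := Real.log_nonneg hL1
      -- (1-δ) * t n ≤ 2 * log n
      have h1 : (1-δ) * t n ≤ 2 * Real.log n := by
        rw [ht n]
        nlinarith [pi_log_nonneg]
      have h2 : √((1-δ)*t n) ≤ √(2 * Real.log n) := Real.sqrt_le_sqrt h1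
      have h3 : √(2 * Real.log n) ≤ (δ/2) * Real.log n := by
        rw [show (δ/2) * Real.log n = √(((δ/2) * Real.log n)^2) by
          rw [Real.sqrt_sq (by positivity)]]
        apply Real.sqrt_le_sqrt
        have h8 : 8 ≤ δ^2 * Real.log n := by
          rw [div_le_iff₀ (by positivity)] at hL8
          linarith
        nlinarith [mul_nonneg (sub_nonneg.mpr h8) (by linarith : (0:ℝ) ≤ Real.log n)]
      have h4 : √((1-δ)*t n) ≤ (δ/2) * Real.log n := le_trans h2 h3
      have h5 : 0 ≤ √((1-δ)*t n) := Real.sqrt_nonneg _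
      -- expand: -(s+1)^2/2 = -s^2/2 - s - 1/2 where s := √((1-δ) t n)
      have h6 : (√((1-δ)*t n))^2 = (1-δ)*t n := Real.sq_sqrt (by nlinarith)
      rw [ht n] at h4 h5 h6 ⊢
      nlinarith [pi_log_nonneg, mul_nonneg (by linarith : (0:ℝ) ≤ 1-δ) hLL,
        mul_nonneg (by linarith : (0:ℝ) ≤ 1-δ) pi_log_nonneg]
    apply tendsto_atTop_mono' atTop hev
    apply tendsto_atTop_add_const_right
    exact Tendsto.const_mul_atTop (by linarith) hlogn
  have h2 : Tendsto (fun n : ℕ => Real.exp (Real.log n + -(√((1-δ)*t n)+1)^2/2)) atTop atTop :=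
    Real.tendsto_exp_atTop.comp key
  have h3 := h2.const_mul_atTop (show (0:ℝ) < (√(2*π))⁻¹ by positivity)
  apply h3.congr'
  filter_upwards [eventually_ge_atTop 1] with n hn
  have hn0 : (0:ℝ) < n := by exact_mod_cast hn
  rw [Real.exp_add, Real.exp_log hn0]
  ring

section Prob

variable {Ω : Type*} [MeasureSpace Ω] [IsProbabilityMeasure (ℙ : Measure Ω)]
  (X : ℕ → Ω → ℝ)

lemma Xpow_integrable (hXmeas : ∀ i, Measurable (X i))
    (hXdist : ∀ i, Measure.map (X i) ℙ = chiSq1) (i m : ℕ) :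
    Integrable (fun ω => X i ω ^ m) ℙ := by
  have h := chiSq1_integrable_pow m
  rw [← hXdist i] at h
  exact (integrable_map_measure (measurable_id.pow_const m).aestronglyMeasurable
    (hXmeas i).aemeasurable).mp h

lemma Xind_integrable (hXmeas : ∀ i, Measurable (X i))
    (hXdist : ∀ i, Measure.map (X i) ℙ = chiSq1) (i m : ℕ) (a : ℝ) :
    Integrable (fun ω => Set.indicator (Set.Ioi a) (fun x : ℝ => x ^ m) (X i ω)) ℙ := by
  have h := chiSq1_integrable_indicator m a
  rw [← hXdist i] at h
  exact (integrable_map_measure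
    ((measurable_id.pow_const m).indicator measurableSet_Ioi).aestronglyMeasurable
    (hXmeas i).aemeasurable).mp h

lemma Mmeas (hXmeas : ∀ i, Measurable (X i)) (n : ℕ) :
    Measurable (fun ω => ⨆ i : Fin n, X i ω) :=
  Measurable.iSup (fun i => hXmeas i)

lemma prob_max_le (hXmeas : ∀ i, Measurable (X i))
    (hXindep : iIndepFun X ℙ)
    (hXdist : ∀ i, Measure.map (X i) ℙ = chiSq1)
    (n : ℕ) (b : ℝ) :
    (ℙ {ω | (⨆ i : Fin n, X i ω) ≤ b}).toReal
      ≤ (1 - (chiSq1 (Set.Ioi b)).toReal) ^ n := by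
  set q : ℝ≥0∞ := chiSq1 (Set.Ioi b) with hq
  have hq1 : q ≤ 1 := prob_le_one
  have hsub : {ω | (⨆ i : Fin n, X i ω) ≤ b} ⊆ ⋂ i ∈ Finset.range n, X i ⁻¹' Set.Iic b := by
    intro ω hω
    simp only [Set.mem_iInter, Set.mem_preimage, Set.mem_Iic, Finset.mem_range]
    intro i hi
    refine le_trans ?_ hω
    exact le_ciSup (f := fun j : Fin n => X j ω) (Set.Finite.bddAbove (Set.finite_range _)) (⟨i, hi⟩ : Fin n)
  have hprod : ℙ (⋂ i ∈ Finset.range n, X i ⁻¹' Set.Iic b) = (1 - q) ^ n := by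
    rw [hXindep.meas_biInter (fun i _ => ⟨Set.Iic b, measurableSet_Iic, rfl⟩)]
    have heach : ∀ i, ℙ (X i ⁻¹' Set.Iic b) = 1 - q := by
      intro i
      rw [← Measure.map_apply (hXmeas i) measurableSet_Iic, hXdist i]
      have : Set.Iic b = (Set.Ioi b)ᶜ := by simp
      rw [this, prob_compl_eq_one_sub measurableSet_Ioi]
    simp only [heach, Finset.prod_const, Finset.card_range]
  have hle : ℙ {ω | (⨆ i : Fin n, X i ω) ≤ b} ≤ (1 - q) ^ n := by
    rw [← hprod]; exact measure_mono hsub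
  have htop : ((1 - q) ^ n : ℝ≥0∞) ≠ ⊤ := by
    apply ENNReal.pow_ne_top
    exact (lt_of_le_of_lt (tsub_le_self) ENNReal.one_lt_top).ne
  calc (ℙ {ω | (⨆ i : Fin n, X i ω) ≤ b}).toReal
      ≤ ((1 - q) ^ n : ℝ≥0∞).toReal := ENNReal.toReal_mono htop hle
    _ = (1 - q.toReal) ^ n := by
        rw [ENNReal.toReal_pow, ENNReal.toReal_sub_of_le hq1 ENNReal.one_ne_top, ENNReal.toReal_one]

lemma prob_gt_eq (hXmeas : ∀ i, Measurable (X i)) (n : ℕ) (b : ℝ) :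
    (ℙ {ω | b < ⨆ i : Fin n, X i ω}).toReal
      = 1 - (ℙ {ω | (⨆ i : Fin n, X i ω) ≤ b}).toReal := by
  have hms : MeasurableSet {ω | (⨆ i : Fin n, X i ω) ≤ b} :=
    measurableSet_le (Mmeas X hXmeas n) measurable_const
  have h1 : {ω | b < ⨆ i : Fin n, X i ω} = {ω | (⨆ i : Fin n, X i ω) ≤ b}ᶜ := by
    ext ω; simp [not_le]
  rw [h1, prob_compl_eq_one_sub hms, ENNReal.toReal_sub_of_le prob_le_one ENNReal.one_ne_top,
    ENNReal.toReal_one]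

end Prob

section Moments

variable {Ω : Type*} [MeasureSpace Ω] [IsProbabilityMeasure (ℙ : Measure Ω)]
  (X : ℕ → Ω → ℝ)

lemma Mk_integrable (hXmeas : ∀ i, Measurable (X i))
    (hXdist : ∀ i, Measure.map (X i) ℙ = chiSq1)
    (hae : ∀ᵐ ω ∂(ℙ : Measure Ω), ∀ i, 0 ≤ X i ω)
    (k : ℕ) {n : ℕ} (hn : 1 ≤ n) :
    Integrable (fun ω => (⨆ i : Fin n, X i ω) ^ k) ℙ := by
  haveI : Nonempty (Fin n) := Fin.pos_iff_nonempty.mp hn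
  apply Integrable.mono' (g := fun ω => ∑ i ∈ Finset.range n, X i ω ^ k)
  · exact integrable_finset_sum _ (fun i _ => Xpow_integrable X hXmeas hXdist i k)
  · exact ((Mmeas X hXmeas n).pow_const k).aestronglyMeasurable
  · filter_upwards [hae] with ω h0
    have hbdd : BddAbove (Set.range fun i : Fin n => X i ω) :=
      Set.Finite.bddAbove (Set.finite_range _)
    rw [← Finset.sup'_univ_eq_ciSup]
    obtain ⟨j, _, hj⟩ := Finset.exists_mem_eq_sup' Finset.univ_nonempty
      (fun i : Fin n => X i ω)
    rw [hj]
    have h1 : 0 ≤ X (j : ℕ) ω ^ k := pow_nonneg (h0 j) k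
    rw [Real.norm_eq_abs, abs_of_nonneg h1]
    apply Finset.single_le_sum (f := fun i => X i ω ^ k)
      (fun i _ => pow_nonneg (h0 i) k)
    exact Finset.mem_range.mpr j.isLt

lemma moment_upper (hXmeas : ∀ i, Measurable (X i))
    (hXdist : ∀ i, Measure.map (X i) ℙ = chiSq1)
    (hae : ∀ᵐ ω ∂(ℙ : Measure Ω), ∀ i, 0 ≤ X i ω)
    (k : ℕ) {n : ℕ} (hn : 1 ≤ n) {a : ℝ} (ha : 0 ≤ a) :
    ∫ ω, (⨆ i : Fin n, X i ω) ^ k ∂ℙ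
      ≤ a ^ k + n * ∫ x in Set.Ioi a, x ^ k ∂chiSq1 := by
  haveI : Nonempty (Fin n) := Fin.pos_iff_nonempty.mp hn
  set g : Ω → ℝ := fun ω => a ^ k
    + ∑ i ∈ Finset.range n, Set.indicator (Set.Ioi a) (fun x : ℝ => x ^ k) (X i ω) with hg
  have hg_int : Integrable g ℙ := by
    apply Integrable.add (integrable_const _)
    exact integrable_finset_sum _ (fun i _ => Xind_integrable X hXmeas hXdist i k a)
  have hle : ∀ᵐ ω ∂(ℙ : Measure Ω), (⨆ i : Fin n, X i ω) ^ k ≤ g ω := by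
    filter_upwards [hae] with ω h0
    rw [hg]
    simp only
    rw [← Finset.sup'_univ_eq_ciSup]
    obtain ⟨j, _, hj⟩ := Finset.exists_mem_eq_sup' Finset.univ_nonempty
      (fun i : Fin n => X i ω)
    rw [hj]
    have hsum_nonneg : 0 ≤ ∑ i ∈ Finset.range n,
        Set.indicator (Set.Ioi a) (fun x : ℝ => x ^ k) (X i ω) :=
      Finset.sum_nonneg (fun i _ => Set.indicator_nonneg (fun x hx => pow_nonneg (le_trans ha (le_of_lt hx)) k) _)
    by_cases hcase : X (j : ℕ) ω ≤ a
    · have : X (j : ℕ) ω ^ k ≤ a ^ k := pow_le_pow_left₀ (h0 j) hcase k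
      linarith
    · push_neg at hcase
      have hterm : X (j : ℕ) ω ^ k
          = Set.indicator (Set.Ioi a) (fun x : ℝ => x ^ k) (X (j : ℕ) ω) := by
        rw [Set.indicator_of_mem (show X (j : ℕ) ω ∈ Set.Ioi a from hcase)]
      have h2 : Set.indicator (Set.Ioi a) (fun x : ℝ => x ^ k) (X (j : ℕ) ω)
          ≤ ∑ i ∈ Finset.range n, Set.indicator (Set.Ioi a) (fun x : ℝ => x ^ k) (X i ω) := by
        apply Finset.single_le_sum
          (f := fun i : ℕ => Set.indicator (Set.Ioi a) (fun x : ℝ => x ^ k) (X i ω))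
          (fun i _ => Set.indicator_nonneg (fun x hx => pow_nonneg (le_trans ha (le_of_lt hx)) k) _)
        exact Finset.mem_range.mpr j.isLt
      have hak : 0 ≤ a ^ k := by positivity
      linarith [hterm ▸ h2]
  have hnonneg : ∀ᵐ ω ∂(ℙ : Measure Ω), 0 ≤ (⨆ i : Fin n, X i ω) ^ k := by
    filter_upwards [hae] with ω h0
    have : 0 ≤ ⨆ i : Fin n, X i ω :=
      le_trans (h0 0) (le_ciSup (f := fun i : Fin n => X i ω)
        (Set.Finite.bddAbove (Set.finite_range _)) ⟨0, hn⟩)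
    positivity
  refine le_trans (integral_mono_of_nonneg hnonneg hg_int hle) ?_
  have heach : ∀ i : ℕ, ∫ ω, Set.indicator (Set.Ioi a) (fun x : ℝ => x ^ k) (X i ω) ∂ℙ
      = ∫ x in Set.Ioi a, x ^ k ∂chiSq1 := by
    intro i
    have h := integral_map (μ := (ℙ : Measure Ω)) (hXmeas i).aemeasurable
      (f := Set.indicator (Set.Ioi a) (fun x : ℝ => x ^ k))
      ((measurable_id.pow_const k).indicator measurableSet_Ioi).aestronglyMeasurable
    rw [hXdist i] at h
    rw [← h, integral_indicator measurableSet_Ioi]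
  rw [hg, integral_add (integrable_const _)
    (integrable_finset_sum _ (fun i _ => Xind_integrable X hXmeas hXdist i k a)),
    integral_const, integral_finset_sum _
      (fun i _ => Xind_integrable X hXmeas hXdist i k a)]
  simp only [measure_univ, probReal_univ, ENNReal.toReal_one, smul_eq_mul, one_mul, heach,
    Finset.sum_const, Finset.card_range, nsmul_eq_mul]
  exact le_refl _

lemma moment_lower (hXmeas : ∀ i, Measurable (X i))
    (hXdist : ∀ i, Measure.map (X i) ℙ = chiSq1)
    (hae : ∀ᵐ ω ∂(ℙ : Measure Ω), ∀ i, 0 ≤ X i ω)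
    (k : ℕ) {n : ℕ} (hn : 1 ≤ n) {b : ℝ} (hb : 0 ≤ b) :
    b ^ k * (ℙ {ω | b < ⨆ i : Fin n, X i ω}).toReal
      ≤ ∫ ω, (⨆ i : Fin n, X i ω) ^ k ∂ℙ := by
  haveI : Nonempty (Fin n) := Fin.pos_iff_nonempty.mp hn
  have hms : MeasurableSet {ω | b < ⨆ i : Fin n, X i ω} :=
    measurableSet_lt measurable_const (Mmeas X hXmeas n)
  have hint := Mk_integrable X hXmeas hXdist hae k hn
  have key : ∫ ω, Set.indicator {ω | b < ⨆ i : Fin n, X i ω} (fun _ => b ^ k) ω ∂ℙ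
      ≤ ∫ ω, (⨆ i : Fin n, X i ω) ^ k ∂ℙ := by
    apply integral_mono_of_nonneg _ hint
    · filter_upwards [hae] with ω h0
      by_cases hω : ω ∈ {ω | b < ⨆ i : Fin n, X i ω}
      · rw [Set.indicator_of_mem hω]
        exact pow_le_pow_left₀ hb (le_of_lt hω) k
      · rw [Set.indicator_of_notMem hω]
        have : 0 ≤ ⨆ i : Fin n, X i ω :=
          le_trans (h0 0) (le_ciSup (f := fun i : Fin n => X i ω)
            (Set.Finite.bddAbove (Set.finite_range _)) ⟨0, hn⟩)
        positivity
    · exact ae_of_all _ (fun ω => Set.indicator_nonneg (fun x _ => pow_nonneg hb k) ω)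
  rwa [integral_indicator_const _ hms, smul_eq_mul, mul_comm] at key

end Moments

/-- For the maximum `X_{(1)}(n)` of `n` i.i.d. chi-squared(1) random variables and
`t n = 2 log n - log log n - log π`, `E[X_{(1)}(n)^k] / t_n^k → 1` for each fixed
positive integer `k`. -/
theorem max_chiSq_normalized_moment_limit
    {Ω : Type*} [MeasureSpace Ω] [IsProbabilityMeasure (ℙ : Measure Ω)]
    (X : ℕ → Ω → ℝ) (hXmeas : ∀ i, Measurable (X i))
    (hXindep : iIndepFun X ℙ)
    (hXdist : ∀ i, Measure.map (X i) ℙ = chiSq1)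
    (t : ℕ → ℝ) (ht : ∀ n, t n = 2 * Real.log n - Real.log (Real.log n) - Real.log π)
    (k : ℕ) (hk : 1 ≤ k) :
    Tendsto
      (fun n : ℕ =>
        (∫ ω, ((⨆ i : Fin n, X i ω)) ^ k ∂ℙ) / (t n) ^ k)
      atTop (nhds 1) := by
  have hae : ∀ᵐ ω ∂(ℙ : Measure Ω), ∀ i, 0 ≤ X i ω := by
    rw [MeasureTheory.ae_all_iff]
    intro i
    have h0 : ℙ (X i ⁻¹' Set.Iio 0) = 0 := by
      rw [← Measure.map_apply (hXmeas i) measurableSet_Iio, hXdist i, chiSq1_neg]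
    rw [ae_iff]
    convert h0 using 2
    ext ω
    simp [not_le]
  have htT := t_tendsto t ht
  rw [tendsto_order]
  constructor
  · -- lower bound branch
    intro c hc
    have hcont : Tendsto (fun δ : ℝ => (1-δ)^k) (𝓝[>] (0:ℝ)) (𝓝 1) := by
      have h1 : ContinuousAt (fun δ : ℝ => (1-δ)^k) 0 :=
        ((continuous_const.sub continuous_id).pow k).continuousAt
      have h2 : Tendsto (fun δ : ℝ => (1-δ)^k) (𝓝 0) (𝓝 1) := by
        simpa using h1.tendsto
      exact h2.mono_left nhdsWithin_le_nhds
    obtain ⟨δ, hδc, hδ1, hδ0'⟩ :=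
      ((hcont.eventually (eventually_gt_nhds hc)).and
        (((eventually_lt_nhds one_pos).filter_mono nhdsWithin_le_nhds).and
          eventually_mem_nhdsWithin)).exists
    rw [Set.mem_Ioi] at hδ0'
    have hδ0 : (0:ℝ) < δ := hδ0'
    set p : ℕ → ℝ := fun n => (chiSq1 (Set.Ioi ((1-δ) * t n))).toReal with hp_def
    have hp1 : ∀ n, p n ≤ 1 := by
      intro n
      have := ENNReal.toReal_mono ENNReal.one_ne_top
        (prob_le_one (μ := chiSq1) (s := Set.Ioi ((1-δ) * t n)))
      simpa using this
    have hp_lb : ∀ᶠ n : ℕ in atTop,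
        (n:ℝ) * ((√(2*π))⁻¹ * Real.exp (-(√((1-δ)*t n)+1)^2/2)) ≤ (n:ℝ) * p n := by
      filter_upwards [htT.eventually (eventually_ge_atTop 0)] with n htn
      apply mul_le_mul_of_nonneg_left _ (Nat.cast_nonneg n)
      exact chiSq1_head (by nlinarith)
    have hnp : Tendsto (fun n : ℕ => (n:ℝ) * p n) atTop atTop :=
      tendsto_atTop_mono' atTop hp_lb (lower_limit t ht hδ0 hδ1)
    have hr_lb : ∀ᶠ n : ℕ in atTop, (1-δ)^k * (1 - Real.exp (-((n:ℝ) * p n)))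
        ≤ (∫ ω, ((⨆ i : Fin n, X i ω)) ^ k ∂ℙ) / (t n) ^ k := by
      filter_upwards [eventually_ge_atTop 1, htT.eventually (eventually_gt_atTop 0)]
        with n hn1 htn
      have hb0 : (0:ℝ) ≤ (1-δ) * t n := by nlinarith
      have hE := moment_lower X hXmeas hXdist hae k hn1 hb0
      have hP1 : 1 - Real.exp (-((n:ℝ) * p n))
          ≤ (ℙ {ω | (1-δ)*t n < ⨆ i : Fin n, X i ω}).toReal := by
        rw [prob_gt_eq X hXmeas]
        have h2 := prob_max_le X hXmeas hXindep hXdist n ((1-δ)*t n)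
        have h4 : 1 - p n ≤ Real.exp (-(p n)) := by
          linarith [Real.add_one_le_exp (-(p n))]
        have h5 : (0:ℝ) ≤ 1 - p n := by linarith [hp1 n]
        have h3 : (1 - p n)^n ≤ Real.exp (-((n:ℝ) * p n)) := by
          calc (1 - p n)^n ≤ (Real.exp (-(p n)))^n := pow_le_pow_left₀ h5 h4 n
            _ = Real.exp (-((n:ℝ) * p n)) := by
                rw [← Real.exp_nat_mul]; congr 1; ring
        linarith
    -- combine
      have htk : (0:ℝ) < (t n)^k := by positivity
      have hdiv : ((1-δ)*t n)^k * (ℙ {ω | (1-δ)*t n < ⨆ i : Fin n, X i ω}).toReal / (t n)^k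
          ≤ (∫ ω, ((⨆ i : Fin n, X i ω)) ^ k ∂ℙ) / (t n) ^ k := by
        gcongr
      have hsimp : ((1-δ)*t n)^k * (ℙ {ω | (1-δ)*t n < ⨆ i : Fin n, X i ω}).toReal / (t n)^k
          = (1-δ)^k * (ℙ {ω | (1-δ)*t n < ⨆ i : Fin n, X i ω}).toReal := by
        rw [mul_pow]
        field_simp
      have hmul : (1-δ)^k * (1 - Real.exp (-((n:ℝ) * p n)))
          ≤ (1-δ)^k * (ℙ {ω | (1-δ)*t n < ⨆ i : Fin n, X i ω}).toReal :=
        mul_le_mul_of_nonneg_left hP1 (pow_nonneg (by linarith) k)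
      calc (1-δ)^k * (1 - Real.exp (-((n:ℝ) * p n)))
          ≤ (1-δ)^k * (ℙ {ω | (1-δ)*t n < ⨆ i : Fin n, X i ω}).toReal := hmul
        _ = ((1-δ)*t n)^k * (ℙ {ω | (1-δ)*t n < ⨆ i : Fin n, X i ω}).toReal / (t n)^k :=
            hsimp.symm
        _ ≤ _ := hdiv
    have hexp : Tendsto (fun n : ℕ => Real.exp (-((n:ℝ) * p n))) atTop (𝓝 0) :=
      Real.tendsto_exp_atBot.comp (tendsto_neg_atTop_atBot.comp hnp)
    have hlim : Tendsto (fun n : ℕ => (1-δ)^k * (1 - Real.exp (-((n:ℝ) * p n)))) atTop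
        (𝓝 ((1-δ)^k)) := by
      have h6 := ((tendsto_const_nhds (x := (1:ℝ)) (f := atTop)).sub hexp).const_mul
        ((1-δ)^k)
      simpa using h6
    filter_upwards [hr_lb, hlim.eventually (eventually_gt_nhds hδc)] with n h1 h2
    linarith
  · -- upper bound branch
    intro c hc
    have hcont : Tendsto (fun δ : ℝ => (1+δ)^k) (𝓝[>] (0:ℝ)) (𝓝 1) := by
      have h1 : ContinuousAt (fun δ : ℝ => (1+δ)^k) 0 :=
        ((continuous_const.add continuous_id).pow k).continuousAt
      have h2 : Tendsto (fun δ : ℝ => (1+δ)^k) (𝓝 0) (𝓝 1) := by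
        simpa using h1.tendsto
      exact h2.mono_left nhdsWithin_le_nhds
    obtain ⟨δ, hδc, hδ0'⟩ :=
      ((hcont.eventually (eventually_lt_nhds hc)).and eventually_mem_nhdsWithin).exists
    rw [Set.mem_Ioi] at hδ0'
    have hδ0 : (0:ℝ) < δ := hδ0'
    have hUlim := upper_limit t ht hδ0
    have hr_ub : ∀ᶠ n : ℕ in atTop,
        (∫ ω, ((⨆ i : Fin n, X i ω)) ^ k ∂ℙ) / (t n) ^ k
          ≤ (1+δ)^k * (1 + 2*(√(2*π))⁻¹
              * ((n:ℝ) * Real.exp (-((1+δ) * t n)/2))) := by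
      filter_upwards [eventually_ge_atTop 1,
        htT.eventually (eventually_ge_atTop (max 1 ((2*(k:ℝ)+2)^2)))] with n hn1 htn
      have htn1 : (1:ℝ) ≤ t n := le_trans (le_max_left _ _) htn
      have htn0 : (0:ℝ) < t n := by linarith
      have ha : (2*(k:ℝ)+2)^2 ≤ (1+δ) * t n := by
        have h7 : (2*(k:ℝ)+2)^2 ≤ t n := le_trans (le_max_right _ _) htn
        nlinarith
      have ha0 : (0:ℝ) ≤ (1+δ)*t n := by nlinarith
      have hE := moment_upper X hXmeas hXdist hae k hn1 ha0
      have hT := chiSq1_tail k hk ha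
      have htk : (0:ℝ) < (t n)^k := by positivity
      have hEb : (∫ ω, ((⨆ i : Fin n, X i ω)) ^ k ∂ℙ)
          ≤ (1+δ)^k * (t n)^k * (1 + 2*(√(2*π))⁻¹
              * ((n:ℝ) * Real.exp (-((1+δ) * t n)/2))) := by
        have hI : (n:ℝ) * (∫ x in Set.Ioi ((1+δ)*t n), x^k ∂chiSq1)
            ≤ (n:ℝ) * (2*(√(2*π))⁻¹ * ((1+δ)*t n)^k * Real.exp (-((1+δ)*t n)/2)) :=
          mul_le_mul_of_nonneg_left hT (Nat.cast_nonneg n)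
        calc (∫ ω, ((⨆ i : Fin n, X i ω)) ^ k ∂ℙ)
            ≤ ((1+δ)*t n)^k + n * ∫ x in Set.Ioi ((1+δ)*t n), x^k ∂chiSq1 := hE
          _ ≤ ((1+δ)*t n)^k
              + (n:ℝ) * (2*(√(2*π))⁻¹ * ((1+δ)*t n)^k * Real.exp (-((1+δ)*t n)/2)) := by
              linarith
          _ = (1+δ)^k * (t n)^k * (1 + 2*(√(2*π))⁻¹
              * ((n:ℝ) * Real.exp (-((1+δ) * t n)/2))) := by
              rw [mul_pow]; ring
      have hdiv : (∫ ω, ((⨆ i : Fin n, X i ω)) ^ k ∂ℙ) / (t n)^k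
          ≤ ((1+δ)^k * (t n)^k * (1 + 2*(√(2*π))⁻¹
              * ((n:ℝ) * Real.exp (-((1+δ) * t n)/2)))) / (t n)^k := by
        gcongr
      refine le_trans hdiv (le_of_eq ?_)
      field_simp
    have hlim : Tendsto (fun n : ℕ => (1+δ)^k * (1 + 2*(√(2*π))⁻¹
        * ((n:ℝ) * Real.exp (-((1+δ) * t n)/2)))) atTop (𝓝 ((1+δ)^k)) := by
      have h6 := ((tendsto_const_nhds (x := (1:ℝ)) (f := atTop)).add
        (hUlim.const_mul (2*(√(2*π))⁻¹))).const_mul ((1+δ)^k)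
      simpa using h6
    filter_upwards [hr_ub, hlim.eventually (eventually_lt_nhds hδc)] with n h1 h2
    linarith
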